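/- Partial closure on sets of indices is commutative: for disjoint sets a, b of indices of a square binary matrix 𝓜 with ones on the diagonal, zer_a (zer_b 𝓜) = zer_b (zer_a 𝓜). -/

import Mathlib

/-- Partial closure of a binary (Bool-valued) square matrix with respect to index `k`. -/
def zerStep {ι : Type*} [DecidableEq ι] (M : Matrix ι ι Bool) (k : ι) : Matrix ι ι Bool :=
  Matrix.of fun i j =>
    if i = k then (if j = k then true else M k j)
    else if j = k then M i k
    else M i j || (M i k && M k j)

/-- Partial closure with respect to a sequence of indices, applied in order. -/
def zerList {ι : Type*} [DecidableEq ι] (l : List ι) (M : Matrix ι ι Bool) : Matrix ι ι Bool :=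
  l.foldl zerStep M

namespace ZerComm

variable {ι : Type*} [DecidableEq ι]

/-- Reachability from `i` to `j` using intermediate nodes from `l`. -/
inductive Reach (M : Matrix ι ι Bool) (l : List ι) : ι → ι → Prop
  | base {i j : ι} : M i j = true → Reach M l i j
  | comp {i j : ι} (k : ι) : k ∈ l → Reach M l i k → Reach M l k j → Reach M l i j

lemma Reach.mono {M : Matrix ι ι Bool} {l l' : List ι} (hl : ∀ x ∈ l, x ∈ l')
    {i j : ι} (h : Reach M l i j) : Reach M l' i j := by
  induction h with
  | base h => exact .base h
  | comp k hk _ _ ih1 ih2 => exact .comp k (hl k hk) ih1 ih2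

lemma zerStep_eq {M : Matrix ι ι Bool} {k : ι} (hkk : M k k = true) (i j : ι) :
    zerStep M k i j = (M i j || (M i k && M k j)) := by
  by_cases hi : i = k <;> by_cases hj : j = k <;>
    simp [zerStep, hi, hj, hkk]

lemma zerStep_diag {M : Matrix ι ι Bool} (hd : ∀ i, M i i = true) (k i : ι) :
    zerStep M k i i = true := by
  by_cases hi : i = k <;> simp [zerStep, hi, hd]

lemma zerStep_le {M : Matrix ι ι Bool} {k i j : ι} (h : M i j = true) :
    zerStep M k i j = true := by
  by_cases hi : i = k <;> by_cases hj : j = k <;>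
    simp [zerStep, hi, hj] <;> subst_vars <;> simp [h]

lemma zerList_diag {l : List ι} : ∀ {M : Matrix ι ι Bool}, (∀ i, M i i = true) →
    ∀ i, zerList l M i i = true := by
  induction l with
  | nil => exact fun hd => hd
  | cons k l ih => exact fun hd => ih (zerStep_diag hd k)

lemma zerList_le {l : List ι} : ∀ {M : Matrix ι ι Bool} {i j : ι}, M i j = true →
    zerList l M i j = true := by
  induction l with
  | nil => exact fun h => h
  | cons k l ih => exact fun h => ih (zerStep_le h)

lemma zerStep_hcomp {M : Matrix ι ι Bool} {k : ι} (hkk : M k k = true) :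
    ∀ i j, zerStep M k i k = true → zerStep M k k j = true → zerStep M k i j = true := by
  intro i j h1 h2
  rw [zerStep_eq hkk] at h1 h2 ⊢
  simp only [Bool.or_eq_true, Bool.and_eq_true] at h1 h2 ⊢
  tauto

/-- In a matrix closed under composition through `k`, edges into `k` can be
absorbed into reachability from `k`. -/
lemma reach_edge_trans {M : Matrix ι ι Bool} {l : List ι} {k : ι}
    (hcomp : ∀ i j, M i k = true → M k j = true → M i j = true)
    {a b : ι} (h : Reach M l a b) : a = k → ∀ i, M i k = true → Reach M l i b := by
  induction h with
  | base h => rintro rfl i hik; exact .base (hcomp _ _ hik h)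
  | comp m hm h1 h2 ih1 ih2 => rintro rfl i hik; exact .comp m hm (ih1 rfl i hik) h2

lemma reach_comp_at {M : Matrix ι ι Bool} {l : List ι} {k : ι}
    (hcomp : ∀ i j, M i k = true → M k j = true → M i j = true)
    {a b : ι} (h : Reach M l a b) : b = k → ∀ j, Reach M l k j → Reach M l a j := by
  induction h with
  | base h => rintro rfl j hkj; exact reach_edge_trans hcomp hkj rfl _ h
  | comp m hm h1 _ _ ih2 => rintro rfl j hkj; exact .comp m hm h1 (ih2 rfl j hkj)

/-- Characterization: the entry of the partial closure is `true` iff there is a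
path using intermediate nodes from the list. -/
lemma zerList_char {l : List ι} : ∀ {M : Matrix ι ι Bool}, (∀ i, M i i = true) →
    ∀ i j, (zerList l M i j = true ↔ Reach M l i j) := by
  induction l with
  | nil =>
    intro M hd i j
    constructor
    · exact fun h => .base h
    · intro h
      induction h with
      | base h => exact h
      | comp m hm _ _ _ _ => exact absurd hm List.not_mem_nil
  | cons k l ih =>
    intro M hd i j
    have hdN : ∀ i, zerStep M k i i = true := zerStep_diag hd k
    show zerList l (zerStep M k) i j = true ↔ _
    rw [ih hdN]
    constructor
    · intro h
      induction h with
      | base h =>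
        rw [zerStep_eq (hd k)] at h
        simp only [Bool.or_eq_true, Bool.and_eq_true] at h
        rcases h with h | ⟨h1, h2⟩
        · exact .base h
        · exact .comp k List.mem_cons_self (.base h1) (.base h2)
      | comp m hm _ _ ih1 ih2 =>
        exact .comp m (List.mem_cons_of_mem k hm) ih1 ih2
    · intro h
      induction h with
      | base h =>
        refine .base ?_
        rw [zerStep_eq (hd k)]
        simp [h]
      | comp m hm _ _ ih1 ih2 =>
        rcases List.mem_cons.mp hm with rfl | hm'
        · exact reach_comp_at (zerStep_hcomp (hd m)) ih1 rfl _ ih2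
        · exact .comp m hm' ih1 ih2

lemma zerList_hcomp {l : List ι} {M : Matrix ι ι Bool} (hd : ∀ i, M i i = true)
    {m : ι} (hm : m ∈ l) :
    ∀ i j, zerList l M i m = true → zerList l M m j = true → zerList l M i j = true := by
  intro i j h1 h2
  rw [zerList_char hd] at h1 h2 ⊢
  exact .comp m hm h1 h2

lemma reach_zerList {l l' : List ι} {M : Matrix ι ι Bool} (hd : ∀ i, M i i = true) {i j : ι} :
    Reach (zerList l M) l' i j ↔ Reach M (l' ++ l) i j := by
  constructor
  · intro h
    induction h with
    | base h =>
      exact ((zerList_char hd _ _).mp h).mono (fun x hx => List.mem_append_right l' hx)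
    | comp m hm _ _ ih1 ih2 =>
      exact .comp m (List.mem_append_left l hm) ih1 ih2
  · intro h
    induction h with
    | base h => exact .base (zerList_le h)
    | comp m hm _ _ ih1 ih2 =>
      rcases List.mem_append.mp hm with hm' | hm'
      · exact .comp m hm' ih1 ih2
      · exact reach_comp_at (zerList_hcomp hd hm') ih1 rfl _ ih2

end ZerComm

/-- partial closure on disjoint index sets commutes. -/
theorem zerList_comm {ι : Type*} [Fintype ι] [DecidableEq ι]
    (M : Matrix ι ι Bool) (hdiag : ∀ i, M i i = true)
    (la lb : List ι) (hna : la.Nodup) (hnb : lb.Nodup)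
    (hdisj : Disjoint la.toFinset lb.toFinset) :
    zerList la (zerList lb M) = zerList lb (zerList la M) := by
  ext i j
  rw [Bool.eq_iff_iff]
  rw [ZerComm.zerList_char (ZerComm.zerList_diag hdiag) i j,
      ZerComm.zerList_char (ZerComm.zerList_diag hdiag) i j,
      ZerComm.reach_zerList hdiag, ZerComm.reach_zerList hdiag]
  constructor
  · exact fun h => h.mono (by intro x hx; simp at hx ⊢; tauto)
  · exact fun h => h.mono (by intro x hx; simp at hx ⊢; tauto)
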